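/- arXiv:1603.07067 — 3 statements merged into one kernel-verified Lean document; each statement's English description precedes it below -/
import Mathlib

section
/- (Square sieve of Heath-Brown.) There is an absolute constant C with the following property. Let ξ : ℕ → ℝ_{≥0} be a function with Σ_{n ∈ ℕ} ξ(n) < ∞, let 𝔓 be a set consisting of P prime numbers, and suppose ξ(0) = 0 and ξ(n) = 0 for all n ≥ e^P. Then Σ_{n ∈ ℕ} ξ(n²) ≤ C · ( (1/P) Σ_{n ∈ ℕ} ξ(n) + (1/P²) Σ_{p, q ∈ 𝔓, p ≠ q} | Σ_{n ∈ ℕ} ξ(n) (n/pq) | ), where (·/pq) denotes the Jacobi symbol modulo pq. -/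
/-- **The square sieve of Heath-Brown.** There is an absolute constant `C` such
that for any nonnegative summable `ξ : ℕ → ℝ` vanishing at `0` and for
`n ≥ e^P`, and any set `𝔓` of `P` primes,
`∑_n ξ(n²) ≤ C ((1/P) ∑_n ξ(n) + (1/P²) ∑_{p ≠ q ∈ 𝔓} |∑_n ξ(n) (n/pq)|)`,
where `(·/pq)` is the Jacobi symbol mod `pq`. -/
theorem square_sieve :
    ∃ C : ℝ, ∀ (ξ : ℕ → ℝ) (𝔓 : Finset ℕ) (P : ℕ),
      (∀ n, 0 ≤ ξ n) → Summable ξ →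
      (∀ p ∈ 𝔓, p.Prime) → 𝔓.card = P →
      ξ 0 = 0 → (∀ n : ℕ, Real.exp P ≤ (n : ℝ) → ξ n = 0) →
      (∑' n : ℕ, ξ (n ^ 2)) ≤
        C * ((1 / (P : ℝ)) * ∑' n : ℕ, ξ n +
          (1 / (P : ℝ) ^ 2) *
            ∑ p ∈ 𝔓, ∑ q ∈ 𝔓,
              if p ≠ q then |∑' n : ℕ, ξ n * (jacobiSym (n : ℤ) (p * q) : ℝ)|
              else 0) := by
  use 16
  intro ξ 𝔓 P hξ0 hsum hprime hcard hzero hvanish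
  have habs : ∀ (a : ℤ) (b : ℕ), |(jacobiSym a b : ℝ)| ≤ 1 := by
    intro a b
    rcases jacobiSym.trichotomy a b with h | h | h <;> rw [h] <;> norm_num
  rcases Nat.eq_zero_or_pos P with hP0 | hPpos
  · -- trivial case P = 0 : ξ is identically zero
    have hξ : ∀ n, ξ n = 0 := by
      intro n
      rcases Nat.eq_zero_or_pos n with rfl | hn
      · exact hzero
      · refine hvanish n ?_
        rw [hP0]
        simpa [Real.exp_zero] using (by exact_mod_cast hn : (1:ℝ) ≤ n)
    simp [hξ, tsum_zero]
  -- main case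
  have hP' : (0:ℝ) < P := by exact_mod_cast hPpos
  have hPne : (P:ℝ) ≠ 0 := ne_of_gt hP'
  set A := ∑' n : ℕ, ξ n with hA
  set T := ∑' n : ℕ, ξ (n ^ 2) with hT
  set Off := ∑ p ∈ 𝔓, ∑ q ∈ 𝔓,
      (if p ≠ q then |∑' n : ℕ, ξ n * (jacobiSym (n : ℤ) (p * q) : ℝ)| else 0) with hOff
  set F : ℕ → ℝ := fun n => ξ n * (∑ p ∈ 𝔓, (jacobiSym (n : ℤ) p : ℝ)) ^ 2 with hF
  have hA0 : 0 ≤ A := tsum_nonneg hξ0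
  have hF0 : ∀ n, 0 ≤ F n := fun n => mul_nonneg (hξ0 n) (sq_nonneg _)
  have hFle : ∀ n, F n ≤ ξ n * (P:ℝ)^2 := by
    intro n
    have h1 : |∑ p ∈ 𝔓, (jacobiSym (n : ℤ) p : ℝ)| ≤ (P:ℝ) := by
      calc |∑ p ∈ 𝔓, (jacobiSym (n : ℤ) p : ℝ)| ≤ ∑ p ∈ 𝔓, |(jacobiSym (n : ℤ) p : ℝ)| :=
            Finset.abs_sum_le_sum_abs _ _
        _ ≤ ∑ p ∈ 𝔓, (1:ℝ) := Finset.sum_le_sum fun p _ => habs _ _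
        _ = (P:ℝ) := by simp [hcard]
    have h2 : (∑ p ∈ 𝔓, (jacobiSym (n : ℤ) p : ℝ))^2 ≤ (P:ℝ)^2 := by
      rw [← sq_abs]
      exact pow_le_pow_left₀ (abs_nonneg _) h1 2
    exact mul_le_mul_of_nonneg_left h2 (hξ0 n)
  have hFs : Summable F :=
    Summable.of_nonneg_of_le hF0 hFle (hsum.mul_right _)
  have hsummand : ∀ p q : ℕ,
      Summable (fun n : ℕ => ξ n * ((jacobiSym (n:ℤ) p : ℝ) * (jacobiSym (n:ℤ) q : ℝ))) := by
    intro p q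
    refine Summable.of_norm_bounded hsum fun n => ?_
    rw [Real.norm_eq_abs, abs_mul, abs_mul, abs_of_nonneg (hξ0 n)]
    calc ξ n * (|(jacobiSym (n:ℤ) p : ℝ)| * |(jacobiSym (n:ℤ) q : ℝ)|)
        ≤ ξ n * (1 * 1) := by
          refine mul_le_mul_of_nonneg_left ?_ (hξ0 n)
          exact mul_le_mul (habs _ _) (habs _ _) (abs_nonneg _) zero_le_one
      _ = ξ n := by ring
  -- upper bound on S := ∑' F
  have hS_eq : (∑' n : ℕ, F n) = ∑ p ∈ 𝔓, ∑ q ∈ 𝔓,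
      ∑' n : ℕ, ξ n * ((jacobiSym (n:ℤ) p : ℝ) * (jacobiSym (n:ℤ) q : ℝ)) := by
    calc (∑' n : ℕ, F n)
        = ∑' n : ℕ, ∑ p ∈ 𝔓, ∑ q ∈ 𝔓,
            ξ n * ((jacobiSym (n:ℤ) p : ℝ) * (jacobiSym (n:ℤ) q : ℝ)) := by
          refine tsum_congr fun n => ?_
          show ξ n * (∑ p ∈ 𝔓, (jacobiSym (n:ℤ) p : ℝ)) ^ 2 = _
          rw [sq, Finset.sum_mul_sum, Finset.mul_sum]
          exact Finset.sum_congr rfl fun p _ => Finset.mul_sum _ _ _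
      _ = ∑ p ∈ 𝔓, ∑' n : ℕ, ∑ q ∈ 𝔓,
            ξ n * ((jacobiSym (n:ℤ) p : ℝ) * (jacobiSym (n:ℤ) q : ℝ)) :=
          Summable.tsum_finsetSum fun p _ => summable_sum fun q _ => hsummand p q
      _ = _ := Finset.sum_congr rfl fun p _ => Summable.tsum_finsetSum fun q _ => hsummand p q
  have hgle : ∀ p ∈ 𝔓, ∀ q ∈ 𝔓,
      (∑' n : ℕ, ξ n * ((jacobiSym (n:ℤ) p : ℝ) * (jacobiSym (n:ℤ) q : ℝ))) ≤
        (if p = q then A else |∑' n : ℕ, ξ n * (jacobiSym (n : ℤ) (p * q) : ℝ)|) := by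
    intro p hp q hq
    by_cases h : p = q
    · subst h
      rw [if_pos rfl]
      refine Summable.tsum_le_tsum (fun n => ?_) (hsummand p p) hsum
      have h1 : (jacobiSym (n:ℤ) p : ℝ) * (jacobiSym (n:ℤ) p : ℝ) ≤ 1 := by
        rcases jacobiSym.trichotomy (n:ℤ) p with h | h | h <;> rw [h] <;> norm_num
      calc ξ n * ((jacobiSym (n:ℤ) p : ℝ) * (jacobiSym (n:ℤ) p : ℝ)) ≤ ξ n * 1 :=
            mul_le_mul_of_nonneg_left h1 (hξ0 n)
        _ = ξ n := mul_one _
    · rw [if_neg h]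
      have hmul : ∀ n : ℕ, (jacobiSym (n:ℤ) (p*q) : ℝ) =
          (jacobiSym (n:ℤ) p : ℝ) * (jacobiSym (n:ℤ) q : ℝ) := by
        intro n
        rw [jacobiSym.mul_right' (n:ℤ) (hprime p hp).ne_zero (hprime q hq).ne_zero]
        push_cast
        ring
      calc (∑' n : ℕ, ξ n * ((jacobiSym (n:ℤ) p : ℝ) * (jacobiSym (n:ℤ) q : ℝ)))
          = ∑' n : ℕ, ξ n * (jacobiSym (n:ℤ) (p*q) : ℝ) :=
            tsum_congr fun n => by rw [hmul n]
        _ ≤ |∑' n : ℕ, ξ n * (jacobiSym (n:ℤ) (p*q) : ℝ)| := le_abs_self _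
  have hS_upper : (∑' n : ℕ, F n) ≤ (P:ℝ) * A + Off := by
    rw [hS_eq]
    calc ∑ p ∈ 𝔓, ∑ q ∈ 𝔓, ∑' n : ℕ, ξ n * ((jacobiSym (n:ℤ) p : ℝ) * (jacobiSym (n:ℤ) q : ℝ))
        ≤ ∑ p ∈ 𝔓, ∑ q ∈ 𝔓,
            (if p = q then A else |∑' n : ℕ, ξ n * (jacobiSym (n : ℤ) (p * q) : ℝ)|) :=
          Finset.sum_le_sum fun p hp => Finset.sum_le_sum fun q hq => hgle p hp q hq
      _ = ∑ p ∈ 𝔓, ∑ q ∈ 𝔓,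
            ((if p = q then A else 0) +
              (if p ≠ q then |∑' n : ℕ, ξ n * (jacobiSym (n : ℤ) (p * q) : ℝ)| else 0)) := by
          refine Finset.sum_congr rfl fun p _ => Finset.sum_congr rfl fun q _ => ?_
          by_cases h : p = q <;> simp [h]
      _ = (P:ℝ) * A + Off := by
          rw [hOff]
          simp only [Finset.sum_add_distrib]
          congr 1
          have h1 : ∀ p ∈ 𝔓, (∑ q ∈ 𝔓, (if p = q then A else 0)) = A := by
            intro p hp
            rw [Finset.sum_ite_eq 𝔓 p (fun _ => A), if_pos hp]
          rw [Finset.sum_congr rfl h1, Finset.sum_const, hcard, nsmul_eq_mul]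
  -- lower bound
  have key : ∀ m : ℕ, ξ (m^2) ≠ 0 →
      (P:ℝ)/4 ≤ ∑ p ∈ 𝔓, (jacobiSym ((m^2 : ℕ) : ℤ) p : ℝ) := by
    intro m hne
    have hm : m ≠ 0 := by
      rintro rfl
      simp only [Nat.zero_pow, ne_eq] at hne
      exact hne (by simpa using hzero)
    -- each term is an indicator of non-divisibility
    have hterm : ∀ p ∈ 𝔓, (jacobiSym ((m^2 : ℕ) : ℤ) p : ℝ) =
        (if p ∣ m then (0:ℝ) else 1) := by
      intro p hp
      have hpp := hprime p hp
      haveI : NeZero p := ⟨hpp.ne_zero⟩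
      have hcast : ((m^2 : ℕ) : ℤ) = (m : ℤ)^2 := by push_cast; ring
      rw [hcast, jacobiSym.pow_left]
      by_cases h : p ∣ m
      · rw [if_pos h]
        have hg : Int.gcd (m : ℤ) (p : ℕ) ≠ 1 := by
          have : Int.gcd (m : ℤ) (p : ℤ) = Nat.gcd m p := Int.gcd_natCast_natCast m p
          rw [show ((p:ℕ):ℤ) = ((p:ℤ)) from rfl] at *
          rw [this, Nat.gcd_eq_right h]
          exact hpp.one_lt.ne'
        rw [jacobiSym.eq_zero_iff_not_coprime.mpr hg]
        norm_num
      · rw [if_neg h]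
        have hg : Int.gcd (m : ℤ) (p : ℕ) = 1 := by
          have : Int.gcd (m : ℤ) (p : ℤ) = Nat.gcd m p := Int.gcd_natCast_natCast m p
          rw [this]
          exact Nat.Coprime.gcd_eq_one (Nat.coprime_comm.mp ((Nat.Prime.coprime_iff_not_dvd hpp).mpr h))
        rcases jacobiSym.eq_one_or_neg_one hg with h1 | h1 <;> rw [h1] <;> norm_num
    rw [Finset.sum_congr rfl hterm]
    set D := 𝔓.filter (fun p => p ∣ m) with hD
    have hkbound : (D.card : ℝ) ≤ 3/4 * P := by
      have hdvd : (∏ p ∈ D, p) ∣ m := by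
        refine Finset.prod_primes_dvd m (fun p hp => ?_) (fun p hp => ?_)
        · exact (hprime p (Finset.mem_filter.mp hp).1).prime
        · exact (Finset.mem_filter.mp hp).2
      have h2k : 2 ^ D.card ≤ m := by
        calc 2 ^ D.card = ∏ _p ∈ D, 2 := by rw [Finset.prod_const]
          _ ≤ ∏ p ∈ D, p := Finset.prod_le_prod'
              (fun p hp => (hprime p (Finset.mem_filter.mp hp).1).two_le)
          _ ≤ m := Nat.le_of_dvd (Nat.pos_of_ne_zero hm) hdvd
      have hlog : (D.card : ℝ) * Real.log 2 ≤ Real.log m := by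
        have h := Real.log_le_log (by positivity)
          (by exact_mod_cast h2k : ((2:ℝ))^D.card ≤ (m:ℝ))
        rwa [Real.log_pow] at h
      have hup : ((m:ℝ))^2 < Real.exp P := by
        by_contra hcon
        push_neg at hcon
        exact hne (hvanish (m^2) (by push_cast; linarith))
      have hlogm : 2 * Real.log m < (P:ℝ) := by
        have h := Real.log_lt_log (by positivity) hup
        rwa [Real.log_pow, Real.log_exp] at h
      nlinarith [Real.log_two_gt_d9, Nat.cast_nonneg (α := ℝ) D.card]
    have hsplit : D.card + (𝔓.filter (fun p => ¬ p ∣ m)).card = P := by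
      rw [← hcard]
      exact Finset.card_filter_add_card_filter_not _
    have hsum_eq : ∑ p ∈ 𝔓, (if p ∣ m then (0:ℝ) else 1) =
        ((𝔓.filter (fun p => ¬ p ∣ m)).card : ℝ) := by
      rw [Finset.sum_ite, Finset.sum_const, Finset.sum_const]
      simp
    rw [hsum_eq]
    have hc := congrArg (Nat.cast : ℕ → ℝ) hsplit
    push_cast at hc
    linarith
  have hinj : Function.Injective (fun m : ℕ => m^2) :=
    Nat.pow_left_injective (by norm_num)
  have hTle : ((P:ℝ)/4)^2 * T ≤ ∑' n : ℕ, F n := by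
    rw [hT, ← tsum_mul_left]
    refine Summable.tsum_le_tsum_of_inj (fun m : ℕ => m^2) hinj
      (fun c _ => hF0 c) (fun m => ?_)
      (((hsum.comp_injective hinj)).mul_left _) hFs
    by_cases h : ξ (m^2) = 0
    · simp only [h, mul_zero]
      exact hF0 (m^2)
    · have h1 : (0:ℝ) ≤ (P:ℝ)/4 := by positivity
      have h2 := key m h
      calc ((P:ℝ)/4)^2 * ξ (m^2) = ξ (m^2) * ((P:ℝ)/4)^2 := by ring
        _ ≤ ξ (m^2) * (∑ p ∈ 𝔓, (jacobiSym ((m^2:ℕ):ℤ) p : ℝ))^2 :=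
            mul_le_mul_of_nonneg_left (pow_le_pow_left₀ h1 h2 2) (hξ0 _)
        _ = F (m^2) := rfl
  have hmain : ((P:ℝ)/4)^2 * T ≤ (P:ℝ)*A + Off := le_trans hTle hS_upper
  have hOff0 : (0:ℝ) ≤ Off := by
    refine Finset.sum_nonneg fun p _ => Finset.sum_nonneg fun q _ => ?_
    by_cases h : p = q <;> simp [h, abs_nonneg]
  calc T = 16/(P:ℝ)^2 * (((P:ℝ)/4)^2 * T) := by field_simp; ring
    _ ≤ 16/(P:ℝ)^2 * ((P:ℝ)*A + Off) :=
        mul_le_mul_of_nonneg_left hmain (by positivity)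
    _ = 16 * (1/(P:ℝ) * A + 1/(P:ℝ)^2 * Off) := by field_simp
end

section
/- There exist constants δ > 0 and C > 0 such that for all sufficiently large X and every real L with X^{1/4} ≤ L ≤ X: Σ_{L < ℓ ≤ 2L, ℓ integer} #{ n integer : X < n ≤ 2X and ℓ² | n² + 1 } ≤ C · X^{1−δ}. -/
set_option maxHeartbeats 1000000

open Classical

/-- Thue-type lemma: if `ℓ² ∣ n² + 1` and `ℓ ≥ 3`, there is a primitive
representation `a² + b² = ℓ²` with `ℓ² ∣ a - n b`. -/
lemma thue_lemma (ℓ n : ℕ) (hl : 3 ≤ ℓ) (hd : (ℓ : ℤ) ^ 2 ∣ (n : ℤ) ^ 2 + 1) :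
    ∃ a b : ℤ, a ^ 2 + b ^ 2 = (ℓ : ℤ) ^ 2 ∧ Int.gcd a b = 1 ∧
      (ℓ : ℤ) ^ 2 ∣ a - (n : ℤ) * b := by
  have hl0 : ℓ ≠ 0 := by omega
  haveI : NeZero (ℓ ^ 2) := ⟨by positivity⟩
  -- pigeonhole
  obtain ⟨x, hx, y, hy, hxy, hfxy⟩ :
      ∃ x ∈ (Finset.range (ℓ+1)) ×ˢ (Finset.range (ℓ+1)),
      ∃ y ∈ (Finset.range (ℓ+1)) ×ˢ (Finset.range (ℓ+1)), x ≠ y ∧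
        ((x.1 : ZMod (ℓ^2)) - (n : ZMod (ℓ^2)) * x.2) =
        ((y.1 : ZMod (ℓ^2)) - (n : ZMod (ℓ^2)) * y.2) := by
    refine Finset.exists_ne_map_eq_of_card_lt_of_maps_to
      (t := (Finset.univ : Finset (ZMod (ℓ^2)))) ?_ (fun a _ => Finset.mem_univ _)
    simp only [Finset.card_product, Finset.card_range, Finset.card_univ, ZMod.card]
    nlinarith
  set a : ℤ := (x.1 : ℤ) - (y.1 : ℤ) with ha_def
  set b : ℤ := (x.2 : ℤ) - (y.2 : ℤ) with hb_def
  have hx1 : x.1 ≤ ℓ := by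
    have := (Finset.mem_product.mp hx).1; simpa [Nat.lt_succ_iff] using this
  have hx2 : x.2 ≤ ℓ := by
    have := (Finset.mem_product.mp hx).2; simpa [Nat.lt_succ_iff] using this
  have hy1 : y.1 ≤ ℓ := by
    have := (Finset.mem_product.mp hy).1; simpa [Nat.lt_succ_iff] using this
  have hy2 : y.2 ≤ ℓ := by
    have := (Finset.mem_product.mp hy).2; simpa [Nat.lt_succ_iff] using this
  have hd1 : (ℓ : ℤ) ^ 2 ∣ a - (n : ℤ) * b := by
    have h0 : ((a - (n : ℤ) * b : ℤ) : ZMod (ℓ^2)) = 0 := by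
      rw [ha_def, hb_def]
      push_cast
      push_cast at hfxy
      linear_combination hfxy
    have := (ZMod.intCast_zmod_eq_zero_iff_dvd _ _).mp h0
    exact_mod_cast this
  have hne : a ≠ 0 ∨ b ≠ 0 := by
    by_contra h
    push_neg at h
    apply hxy
    have h1 : x.1 = y.1 := by omega
    have h2 : x.2 = y.2 := by omega
    exact Prod.ext h1 h2
  have ha2 : a ^ 2 ≤ (ℓ : ℤ) ^ 2 := by
    have : -(ℓ:ℤ) ≤ a := by omega
    have : a ≤ (ℓ:ℤ) := by omega
    nlinarith
  have hb2 : b ^ 2 ≤ (ℓ : ℤ) ^ 2 := by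
    have : -(ℓ:ℤ) ≤ b := by omega
    have : b ≤ (ℓ:ℤ) := by omega
    nlinarith
  have hdvd2 : (ℓ : ℤ) ^ 2 ∣ a ^ 2 + b ^ 2 := by
    have hid : a ^ 2 + b ^ 2 =
        (a - (n:ℤ) * b) * (a + (n:ℤ) * b) + b ^ 2 * ((n:ℤ)^2 + 1) := by ring
    rw [hid]
    exact dvd_add (Dvd.dvd.mul_right hd1 _) (Dvd.dvd.mul_left hd _)
  have hpos : 0 < a ^ 2 + b ^ 2 := by
    rcases hne with h | h
    · have : 0 < a ^ 2 := by positivity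
      nlinarith
    · have : 0 < b ^ 2 := by positivity
      nlinarith
  have hlZ : (3 : ℤ) ≤ (ℓ : ℤ) := by exact_mod_cast hl
  -- a² + b² = ℓ² or 2ℓ²
  obtain ⟨k, hk⟩ := hdvd2
  have hk1 : 1 ≤ k := by nlinarith
  have hk2 : k ≤ 2 := by nlinarith
  have hksum : a ^ 2 + b ^ 2 = (ℓ:ℤ)^2 ∨ a ^ 2 + b ^ 2 = 2 * (ℓ:ℤ)^2 := by
    interval_cases k
    · left; linarith [hk]
    · right; linarith [hk]
  -- rule out 2ℓ²
  have hsum : a ^ 2 + b ^ 2 = (ℓ:ℤ)^2 := by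
    rcases hksum with h | h
    · exact h
    · exfalso
      have haa : a ^ 2 = (ℓ:ℤ)^2 := by nlinarith
      have hbb : b ^ 2 = (ℓ:ℤ)^2 := by nlinarith
      have ha' : (a - ℓ) * (a + ℓ) = 0 := by linear_combination haa
      have hb' : (b - ℓ) * (b + ℓ) = 0 := by linear_combination hbb
      have hdl : (ℓ:ℤ) ∣ (n:ℤ)^2 + 1 := dvd_trans (dvd_pow_self _ two_ne_zero) hd
      -- from ℓ² ∣ a - n b with a = ±ℓ, b = ±ℓ, deduce ℓ ∣ n ∓ 1 type facts
      have key : ∀ e1 e2 : ℤ, (e1 = 1 ∨ e1 = -1) → (e2 = 1 ∨ e2 = -1) →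
          a = e1 * ℓ → b = e2 * ℓ → False := by
        intro e1 e2 he1 he2 hae hbe
        have : (ℓ:ℤ)^2 ∣ (e1 - (n:ℤ) * e2) * ℓ := by
          have : (e1 - (n:ℤ) * e2) * ℓ = a - (n:ℤ) * b := by rw [hae, hbe]; ring
          rw [this]; exact hd1
        have hdvd : (ℓ:ℤ) ∣ e1 - (n:ℤ) * e2 := by
          have hl0' : (ℓ:ℤ) ≠ 0 := by positivity
          rcases this with ⟨c, hc⟩
          refine ⟨c, ?_⟩
          have h' : (e1 - (n:ℤ) * e2) * ℓ = (ℓ * c) * ℓ := by linear_combination hc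
          exact mul_right_cancel₀ hl0' h'
        have h2 : (ℓ:ℤ) ∣ 1 - (n:ℤ)^2 := by
          have : ((e1 - (n:ℤ)*e2) * (e1 + (n:ℤ)*e2)) = 1 - (n:ℤ)^2 := by
            rcases he1 with rfl | rfl <;> rcases he2 with rfl | rfl <;> ring
          rw [← this]
          exact Dvd.dvd.mul_right hdvd _
        have h3 : (ℓ:ℤ) ∣ 2 := by
          have : (2:ℤ) = ((n:ℤ)^2 + 1) + (1 - (n:ℤ)^2) := by ring
          rw [this]; exact dvd_add hdl h2
        have := Int.le_of_dvd (by norm_num) h3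
        omega
      rcases mul_eq_zero.mp ha' with h1 | h1 <;> rcases mul_eq_zero.mp hb' with h2 | h2
      · exact key 1 1 (Or.inl rfl) (Or.inl rfl) (by linarith) (by linarith)
      · exact key 1 (-1) (Or.inl rfl) (Or.inr rfl) (by linarith) (by linarith)
      · exact key (-1) 1 (Or.inr rfl) (Or.inl rfl) (by linarith) (by linarith)
      · exact key (-1) (-1) (Or.inr rfl) (Or.inr rfl) (by linarith) (by linarith)
  -- primitivity
  refine ⟨a, b, hsum, ?_, hd1⟩
  set g : ℕ := Int.gcd a b with hg_def
  have hg0 : g ≠ 0 := by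
    rcases hne with h | h
    · exact fun hg => h (Int.natAbs_eq_zero.mp (Nat.eq_zero_of_gcd_eq_zero_left (hg_def ▸ hg)))
    · exact fun hg => h (Int.natAbs_eq_zero.mp (Nat.eq_zero_of_gcd_eq_zero_right (hg_def ▸ hg)))
  have hga : (g:ℤ) ∣ a := Int.gcd_dvd_left a b
  have hgb : (g:ℤ) ∣ b := Int.gcd_dvd_right a b
  have hgl : (g:ℤ) ∣ (ℓ:ℤ) := by
    rw [← Int.pow_dvd_pow_iff (two_ne_zero)]
    rw [← hsum]
    exact dvd_add (pow_dvd_pow_of_dvd hga 2) (pow_dvd_pow_of_dvd hgb 2)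
  obtain ⟨a', ha'⟩ := hga
  obtain ⟨b', hb'⟩ := hgb
  obtain ⟨l', hl'⟩ := hgl
  have hgZ : (0:ℤ) < (g:ℤ) := by positivity
  have hl'pos : 0 < l' := by nlinarith
  have hsum' : a' ^ 2 + b' ^ 2 = l' ^ 2 := by
    have h : (g:ℤ)^2 * (a' ^ 2 + b' ^ 2) = (g:ℤ)^2 * l' ^ 2 := by
      rw [ha', hb', hl'] at hsum; linear_combination hsum
    exact mul_left_cancel₀ (by positivity) h
  have hd1' : (g:ℤ) * l' ^ 2 ∣ a' - (n:ℤ) * b' := by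
    have h : (g:ℤ) * ((g:ℤ) * l'^2) ∣ (g:ℤ) * (a' - (n:ℤ)*b') := by
      have e1 : (g:ℤ) * ((g:ℤ) * l'^2) = (ℓ:ℤ)^2 := by rw [hl']; ring
      have e2 : (g:ℤ) * (a' - (n:ℤ)*b') = a - (n:ℤ)*b := by rw [ha', hb']; ring
      rw [e1, e2]; exact hd1
    exact (mul_dvd_mul_iff_left (by positivity : (g:ℤ) ≠ 0)).mp h
  have hdl2 : (g:ℤ) * l'^2 ∣ (n:ℤ)^2 + 1 := by
    refine dvd_trans ?_ hd
    refine ⟨g, ?_⟩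
    rw [hl']; ring
  have hfin : (g:ℤ) * l'^2 ∣ l' ^ 2 := by
    have hfin' : (g:ℤ) * l'^2 ∣ a' ^ 2 + b' ^ 2 := by
      have hid : a' ^ 2 + b' ^ 2 =
          (a' - (n:ℤ) * b') * (a' + (n:ℤ) * b') + b' ^ 2 * ((n:ℤ)^2 + 1) := by ring
      rw [hid]
      exact dvd_add (Dvd.dvd.mul_right hd1' _) (Dvd.dvd.mul_left hdl2 _)
    rwa [hsum'] at hfin'
  have := Int.le_of_dvd (by positivity) hfin
  have hg1 : (g:ℤ) ≤ 1 := by nlinarith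
  have : g = 1 := by omega
  exact_mod_cast this

/-- a choice of a primitive representation attached to a pair `(ℓ, n)`. -/
noncomputable def pickAB (ℓ n : ℕ) : ℤ × ℤ :=
  if h : ∃ p : ℤ × ℤ, p.1 ^ 2 + p.2 ^ 2 = (ℓ : ℤ) ^ 2 ∧ Int.gcd p.1 p.2 = 1 ∧
      (ℓ : ℤ) ^ 2 ∣ p.1 - (n : ℤ) * p.2 then h.choose else (0, 0)

lemma pickAB_spec (ℓ n : ℕ) (hl : 3 ≤ ℓ) (hd : ℓ ^ 2 ∣ n ^ 2 + 1) :
    (pickAB ℓ n).1 ^ 2 + (pickAB ℓ n).2 ^ 2 = (ℓ : ℤ) ^ 2 ∧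
    Int.gcd (pickAB ℓ n).1 (pickAB ℓ n).2 = 1 ∧
    (ℓ : ℤ) ^ 2 ∣ (pickAB ℓ n).1 - (n : ℤ) * (pickAB ℓ n).2 := by
  have hdZ : (ℓ : ℤ) ^ 2 ∣ (n : ℤ) ^ 2 + 1 := by
    have := Int.natCast_dvd_natCast.mpr hd
    push_cast at this
    exact this
  obtain ⟨a, b, h1, h2, h3⟩ := thue_lemma ℓ n hl hdZ
  have hex : ∃ p : ℤ × ℤ, p.1 ^ 2 + p.2 ^ 2 = (ℓ : ℤ) ^ 2 ∧ Int.gcd p.1 p.2 = 1 ∧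
      (ℓ : ℤ) ^ 2 ∣ p.1 - (n : ℤ) * p.2 := ⟨(a, b), h1, h2, h3⟩
  rw [pickAB, dif_pos hex]
  exact hex.choose_spec

lemma three_le_L {X L : ℝ} (hX : 100 ≤ X) (hL1 : X ^ ((1:ℝ)/4) ≤ L) : (3:ℝ) ≤ L := by
  have h81 : ((81:ℝ)) ^ ((1:ℝ)/4) ≤ X ^ ((1:ℝ)/4) :=
    Real.rpow_le_rpow (by norm_num) (by linarith) (by norm_num)
  have h3 : ((81:ℝ)) ^ ((1:ℝ)/4) = 3 := by
    rw [show (81:ℝ) = 3 ^ (4:ℕ) by norm_num, ← Real.rpow_natCast 3 4,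
      ← Real.rpow_mul (by norm_num : (0:ℝ) ≤ 3)]
    norm_num
  linarith

/-- Bound for the small-`L` regime, via Thue + Pythagorean parametrization. -/
lemma bound_small (X L : ℝ) (hX : 100 ≤ X) (hL1 : X ^ ((1:ℝ)/4) ≤ L) (hL2 : L ≤ X) :
    (((Finset.range (⌊2 * L⌋₊ + 1)).filter
        (fun ℓ : ℕ => L < (ℓ : ℝ) ∧ (ℓ : ℝ) ≤ 2 * L)).sigma
      (fun ℓ : ℕ => (Finset.range (⌊2 * X⌋₊ + 1)).filter
        (fun n : ℕ => X < (n : ℝ) ∧ (n : ℝ) ≤ 2 * X ∧ ℓ ^ 2 ∣ n ^ 2 + 1))).card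
    ≤ 2 * (2 * ⌊Real.sqrt (2 * L)⌋₊ + 1) ^ 2 * (⌊2 * X / L ^ 2⌋₊ + 1) := by
  have hX0 : (0:ℝ) < X := by linarith
  have hL3 : (3:ℝ) ≤ L := three_le_L hX hL1
  have hL0 : (0:ℝ) < L := by linarith
  set B : ℕ := ⌊Real.sqrt (2 * L)⌋₊ with hB_def
  set J : ℕ := ⌊2 * X / L ^ 2⌋₊ with hJ_def
  set hmap : (ℤ × ℤ) × Bool → ℤ × ℤ := fun q =>
    if q.2 then (q.1.1 ^ 2 - q.1.2 ^ 2, 2 * q.1.1 * q.1.2)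
    else (2 * q.1.1 * q.1.2, q.1.1 ^ 2 - q.1.2 ^ 2) with hmap_def
  -- facts about members
  have hmem : ∀ p : (_ : ℕ) × ℕ, p ∈ (((Finset.range (⌊2 * L⌋₊ + 1)).filter
        (fun ℓ : ℕ => L < (ℓ : ℝ) ∧ (ℓ : ℝ) ≤ 2 * L)).sigma
      (fun ℓ : ℕ => (Finset.range (⌊2 * X⌋₊ + 1)).filter
        (fun n : ℕ => X < (n : ℝ) ∧ (n : ℝ) ≤ 2 * X ∧ ℓ ^ 2 ∣ n ^ 2 + 1))) →
      (L < (p.1 : ℝ) ∧ (p.1 : ℝ) ≤ 2 * L) ∧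
      (X < (p.2 : ℝ) ∧ (p.2 : ℝ) ≤ 2 * X ∧ p.1 ^ 2 ∣ p.2 ^ 2 + 1) ∧ 3 ≤ p.1 := by
    intro p hp
    rw [Finset.mem_sigma] at hp
    obtain ⟨hp1, hp2⟩ := hp
    rw [Finset.mem_filter] at hp1 hp2
    refine ⟨hp1.2, hp2.2, ?_⟩
    have h3 : (3:ℝ) < (p.1 : ℝ) := lt_of_le_of_lt hL3 hp1.2.1
    have h3' : 3 < p.1 := by exact_mod_cast h3
    omega
  -- the injection
  have hcard : (((Finset.range (⌊2 * L⌋₊ + 1)).filter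
        (fun ℓ : ℕ => L < (ℓ : ℝ) ∧ (ℓ : ℝ) ≤ 2 * L)).sigma
      (fun ℓ : ℕ => (Finset.range (⌊2 * X⌋₊ + 1)).filter
        (fun n : ℕ => X < (n : ℝ) ∧ (n : ℝ) ≤ 2 * X ∧ ℓ ^ 2 ∣ n ^ 2 + 1))).card ≤
      ((Finset.image hmap ((Finset.Icc (-(B:ℤ)) B ×ˢ Finset.Icc (-(B:ℤ)) B) ×ˢ
          (Finset.univ : Finset Bool))) ×ˢ Finset.range (J + 1)).card := by
    apply Finset.card_le_card_of_injOn
      (fun p : (_ : ℕ) × ℕ => (pickAB p.1 p.2, p.2 / p.1 ^ 2))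
    · -- maps to
      intro p hp
      obtain ⟨⟨hpl1, hpl2⟩, ⟨hpn1, hpn2, hpd⟩, hp3⟩ := hmem p hp
      obtain ⟨h1, h2, h3⟩ := pickAB_spec p.1 p.2 hp3 hpd
      rw [Finset.mem_coe, Finset.mem_product]
      constructor
      · -- first component in the image
        have hpt : PythagoreanTriple (pickAB p.1 p.2).1 (pickAB p.1 p.2).2 (p.1 : ℤ) := by
          unfold PythagoreanTriple
          linear_combination h1
        obtain ⟨m, n', hmn, hz, -, -⟩ := (PythagoreanTriple.coprime_classification).mp ⟨hpt, h2⟩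
        have hp1pos : (0:ℤ) < (p.1 : ℤ) := by
          have : 0 < p.1 := by omega
          exact_mod_cast this
        have hℓmn : (p.1 : ℤ) = m ^ 2 + n' ^ 2 := by
          rcases hz with h | h
          · exact h
          · exfalso; nlinarith [sq_nonneg m, sq_nonneg n']
        have hbox : ∀ t : ℤ, t ^ 2 ≤ (p.1 : ℤ) → t ∈ Finset.Icc (-(B:ℤ)) B := by
          intro t ht
          have htR : ((t.natAbs : ℝ)) ^ 2 ≤ 2 * L := by
            have e1 : ((t.natAbs : ℝ)) ^ 2 = ((t : ℝ)) ^ 2 := by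
              rw [Nat.cast_natAbs, Int.cast_abs]
              exact sq_abs ((t : ℝ))
            have e2 : ((t : ℝ)) ^ 2 ≤ (p.1 : ℝ) := by exact_mod_cast ht
            linarith
          have hsq : ((t.natAbs : ℝ)) ≤ Real.sqrt (2 * L) := by
            have := Real.sqrt_le_sqrt htR
            rwa [Real.sqrt_sq (by positivity)] at this
          have : t.natAbs ≤ B := Nat.le_floor hsq
          rw [Finset.mem_Icc]
          omega
        have hmbox : m ∈ Finset.Icc (-(B:ℤ)) B := by
          apply hbox; nlinarith [sq_nonneg n']
        have hn'box : n' ∈ Finset.Icc (-(B:ℤ)) B := by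
          apply hbox; nlinarith [sq_nonneg m]
        rw [Finset.mem_image]
        rcases hmn with ⟨hma, hmb⟩ | ⟨hma, hmb⟩
        · exact ⟨((m, n'), true), by
            rw [Finset.mem_product]
            exact ⟨Finset.mem_product.mpr ⟨hmbox, hn'box⟩, Finset.mem_univ _⟩,
            by
              show ((m ^ 2 - n' ^ 2 : ℤ), (2 * m * n' : ℤ)) = pickAB p.1 p.2
              exact (Prod.ext hma hmb).symm⟩
        · exact ⟨((m, n'), false), by
            rw [Finset.mem_product]
            exact ⟨Finset.mem_product.mpr ⟨hmbox, hn'box⟩, Finset.mem_univ _⟩,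
            by
              show ((2 * m * n' : ℤ), (m ^ 2 - n' ^ 2 : ℤ)) = pickAB p.1 p.2
              exact (Prod.ext hma hmb).symm⟩
      · -- second component: block index
        rw [Finset.mem_range, Nat.lt_succ_iff]
        apply Nat.le_floor
        calc ((p.2 / p.1 ^ 2 : ℕ) : ℝ) ≤ (p.2 : ℝ) / ((p.1 ^ 2 : ℕ) : ℝ) := Nat.cast_div_le
          _ = (p.2 : ℝ) / ((p.1 : ℝ)) ^ 2 := by push_cast; ring_nf
          _ ≤ 2 * X / L ^ 2 := by
              apply div_le_div₀ (by positivity) hpn2 (by positivity)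
              have : L ≤ (p.1 : ℝ) := le_of_lt hpl1
              nlinarith
    · -- injectivity
      rintro ⟨ℓ₁, n₁⟩ hp ⟨ℓ₂, n₂⟩ hq heq
      simp only [Finset.mem_coe] at hp hq
      obtain ⟨⟨hpl1, hpl2⟩, ⟨hpn1, hpn2, hpd⟩, hp3⟩ := hmem _ hp
      obtain ⟨⟨hql1, hql2⟩, ⟨hqn1, hqn2, hqd⟩, hq3⟩ := hmem _ hq
      obtain ⟨h1p, h2p, h3p⟩ := pickAB_spec ℓ₁ n₁ hp3 hpd
      obtain ⟨h1q, h2q, h3q⟩ := pickAB_spec ℓ₂ n₂ hq3 hqd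
      have hab : pickAB ℓ₁ n₁ = pickAB ℓ₂ n₂ := congrArg Prod.fst heq
      have hj : n₁ / ℓ₁ ^ 2 = n₂ / ℓ₂ ^ 2 := congrArg Prod.snd heq
      rw [hab] at h1p h2p h3p
      set a : ℤ := (pickAB ℓ₂ n₂).1
      set b : ℤ := (pickAB ℓ₂ n₂).2
      -- ℓ₁ = ℓ₂
      have hll : ℓ₁ = ℓ₂ := by
        have hZ : (ℓ₁ : ℤ) ^ 2 = (ℓ₂ : ℤ) ^ 2 := by rw [← h1p, ← h1q]
        have hN : ℓ₁ ^ 2 = ℓ₂ ^ 2 := by exact_mod_cast hZ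
        exact Nat.pow_left_injective (by norm_num) hN
      subst hll
      -- coprimality of ℓ² and b
      have hcop : IsCoprime ((ℓ₁ : ℤ) ^ 2) b := by
        obtain ⟨u, v, huv⟩ := Int.isCoprime_iff_gcd_eq_one.mpr h2p
        obtain ⟨c, hc⟩ := h3p
        exact ⟨u * c, u * (n₁ : ℤ) + v, by linear_combination huv - u * hc⟩
      -- ℓ² ∣ n₁ - n₂
      have hdvd : (ℓ₁ : ℤ) ^ 2 ∣ ((n₁ : ℤ) - (n₂ : ℤ)) * b := by
        have e : ((n₁ : ℤ) - (n₂ : ℤ)) * b = (a - (n₂:ℤ) * b) - (a - (n₁:ℤ) * b) := by ring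
        rw [e]
        exact dvd_sub h3q h3p
      have hdvd2 : (ℓ₁ : ℤ) ^ 2 ∣ ((n₁ : ℤ) - (n₂ : ℤ)) := hcop.dvd_of_dvd_mul_right hdvd
      -- same residue and same block imply equality
      have hmodZ : (n₁ : ℤ) % ((ℓ₁:ℤ) ^ 2) = (n₂ : ℤ) % ((ℓ₁:ℤ) ^ 2) :=
        (Int.modEq_iff_dvd.mpr hdvd2).symm
      have hn : n₁ = n₂ := by
        have hmodN : n₁ % ℓ₁ ^ 2 = n₂ % ℓ₁ ^ 2 := by
          have : ((n₁ % ℓ₁ ^ 2 : ℕ) : ℤ) = ((n₂ % ℓ₁ ^ 2 : ℕ) : ℤ) := by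
            push_cast
            exact hmodZ
          exact_mod_cast this
        have e1 := Nat.div_add_mod n₁ (ℓ₁ ^ 2)
        have e2 := Nat.div_add_mod n₂ (ℓ₁ ^ 2)
        have e3 : ℓ₁ ^ 2 * (n₁ / ℓ₁ ^ 2) = ℓ₁ ^ 2 * (n₂ / ℓ₁ ^ 2) := by rw [hj]
        omega
      subst hn
      rfl
  refine hcard.trans ?_
  have hIcc : (Finset.Icc (-(B:ℤ)) B).card = 2 * B + 1 := by
    rw [Int.card_Icc]
    omega
  rw [Finset.card_product, Finset.card_range]
  have himg : (Finset.image hmap ((Finset.Icc (-(B:ℤ)) B ×ˢ Finset.Icc (-(B:ℤ)) B) ×ˢ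
      (Finset.univ : Finset Bool))).card ≤ 2 * (2 * B + 1) ^ 2 := by
    refine (Finset.card_image_le).trans ?_
    rw [Finset.card_product, Finset.card_product, hIcc, Finset.card_univ, Fintype.card_bool]
    ring_nf
    omega
  exact Nat.mul_le_mul_right _ himg

/-- Bound for the large-`L` regime, via the injection `(ℓ, n) ↦ (n² + 1)/ℓ²`. -/
lemma bound_large (X L : ℝ) (hX : 100 ≤ X) (hL1 : X ^ ((1:ℝ)/4) ≤ L) (hL2 : L ≤ X) :
    (((Finset.range (⌊2 * L⌋₊ + 1)).filter
        (fun ℓ : ℕ => L < (ℓ : ℝ) ∧ (ℓ : ℝ) ≤ 2 * L)).sigma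
      (fun ℓ : ℕ => (Finset.range (⌊2 * X⌋₊ + 1)).filter
        (fun n : ℕ => X < (n : ℝ) ∧ (n : ℝ) ≤ 2 * X ∧ ℓ ^ 2 ∣ n ^ 2 + 1))).card
    ≤ ⌊5 * X ^ 2 / L ^ 2⌋₊ + 1 := by
  have hX0 : (0:ℝ) < X := by linarith
  have hL3 : (3:ℝ) ≤ L := three_le_L hX hL1
  have hL0 : (0:ℝ) < L := by linarith
  have hmem : ∀ p : (_ : ℕ) × ℕ, p ∈ (((Finset.range (⌊2 * L⌋₊ + 1)).filter
        (fun ℓ : ℕ => L < (ℓ : ℝ) ∧ (ℓ : ℝ) ≤ 2 * L)).sigma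
      (fun ℓ : ℕ => (Finset.range (⌊2 * X⌋₊ + 1)).filter
        (fun n : ℕ => X < (n : ℝ) ∧ (n : ℝ) ≤ 2 * X ∧ ℓ ^ 2 ∣ n ^ 2 + 1))) →
      (L < (p.1 : ℝ) ∧ (p.1 : ℝ) ≤ 2 * L) ∧
      (X < (p.2 : ℝ) ∧ (p.2 : ℝ) ≤ 2 * X ∧ p.1 ^ 2 ∣ p.2 ^ 2 + 1) ∧ 3 ≤ p.1 := by
    intro p hp
    rw [Finset.mem_sigma] at hp
    obtain ⟨hp1, hp2⟩ := hp
    rw [Finset.mem_filter] at hp1 hp2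
    refine ⟨hp1.2, hp2.2, ?_⟩
    have h3 : (3:ℝ) < (p.1 : ℝ) := lt_of_le_of_lt hL3 hp1.2.1
    have h3' : 3 < p.1 := by exact_mod_cast h3
    omega
  rw [show ⌊5 * X ^ 2 / L ^ 2⌋₊ + 1 = (Finset.range (⌊5 * X ^ 2 / L ^ 2⌋₊ + 1)).card by
    rw [Finset.card_range]]
  apply Finset.card_le_card_of_injOn (fun p : (_ : ℕ) × ℕ => (p.2 ^ 2 + 1) / p.1 ^ 2)
  · -- maps to
    intro p hp
    obtain ⟨⟨hpl1, hpl2⟩, ⟨hpn1, hpn2, hpd⟩, hp3⟩ := hmem p hp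
    rw [Finset.mem_coe, Finset.mem_range, Nat.lt_succ_iff]
    apply Nat.le_floor
    have hp1posR : (0:ℝ) < ((p.1 : ℝ)) ^ 2 := by positivity
    calc (((p.2 ^ 2 + 1) / p.1 ^ 2 : ℕ) : ℝ)
        ≤ ((p.2 ^ 2 + 1 : ℕ) : ℝ) / ((p.1 ^ 2 : ℕ) : ℝ) := Nat.cast_div_le
      _ = ((p.2 : ℝ) ^ 2 + 1) / ((p.1 : ℝ)) ^ 2 := by push_cast; ring_nf
      _ ≤ 5 * X ^ 2 / L ^ 2 := by
          apply div_le_div₀ (by positivity) ?_ (by positivity) ?_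
          · nlinarith
          · nlinarith
  · -- injectivity
    rintro ⟨ℓ₁, n₁⟩ hp ⟨ℓ₂, n₂⟩ hq heq
    simp only [Finset.mem_coe] at hp hq
    obtain ⟨⟨hpl1, hpl2⟩, ⟨hpn1, hpn2, hpd⟩, hp3⟩ := hmem _ hp
    obtain ⟨⟨hql1, hql2⟩, ⟨hqn1, hqn2, hqd⟩, hq3⟩ := hmem _ hq
    simp only at heq hpl1 hpl2 hpn1 hpn2 hpd hp3 hql1 hql2 hqn1 hqn2 hqd hq3
    set m : ℕ := (n₂ ^ 2 + 1) / ℓ₂ ^ 2 with hm_def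
    have hm1 : ℓ₁ ^ 2 * ((n₁ ^ 2 + 1) / ℓ₁ ^ 2) = n₁ ^ 2 + 1 := Nat.mul_div_cancel' hpd
    have hm2 : ℓ₂ ^ 2 * m = n₂ ^ 2 + 1 := Nat.mul_div_cancel' hqd
    rw [heq] at hm1
    have hz1 : (ℓ₁ : ℤ) ^ 2 * (m : ℤ) = (n₁ : ℤ) ^ 2 + 1 := by exact_mod_cast hm1
    have hz2 : (ℓ₂ : ℤ) ^ 2 * (m : ℤ) = (n₂ : ℤ) ^ 2 + 1 := by exact_mod_cast hm2
    set u : ℤ := (n₁ : ℤ) * ℓ₂ - (n₂ : ℤ) * ℓ₁ with hu_def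
    have huv : u * ((n₁ : ℤ) * ℓ₂ + (n₂ : ℤ) * ℓ₁) = (ℓ₁ : ℤ) ^ 2 - (ℓ₂ : ℤ) ^ 2 := by
      rw [hu_def]
      linear_combination (ℓ₁:ℤ)^2 * hz2 - (ℓ₂:ℤ)^2 * hz1
    by_cases hu : u = 0
    · have h0 : (ℓ₁ : ℤ) ^ 2 = (ℓ₂ : ℤ) ^ 2 := by
        have := huv
        rw [hu] at this
        linarith
      have hN : ℓ₁ ^ 2 = ℓ₂ ^ 2 := by exact_mod_cast h0
      have hll : ℓ₁ = ℓ₂ := Nat.pow_left_injective (by norm_num) hN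
      subst hll
      have hnn : n₁ ^ 2 = n₂ ^ 2 := by
        have h1 := hm1
        rw [hm2] at h1
        omega
      have : n₁ = n₂ := Nat.pow_left_injective (by norm_num) hnn
      subst this
      rfl
    · exfalso
      have hu1 : (1:ℤ) ≤ |u| := Int.one_le_abs hu
      rw [hu_def] at hu1 huv
      have habsR : (1:ℝ) ≤ |((n₁ : ℝ) * ℓ₂ - (n₂ : ℝ) * ℓ₁)| := by
        have h' := (@Int.cast_le ℝ _ _ _).mpr hu1
        push_cast at h'
        exact h'
      have hvR : ((n₁ : ℝ) * ℓ₂ - (n₂ : ℝ) * ℓ₁) * ((n₁ : ℝ) * ℓ₂ + (n₂ : ℝ) * ℓ₁)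
          = (ℓ₁ : ℝ) ^ 2 - (ℓ₂ : ℝ) ^ 2 := by
        have h' := congrArg (fun z : ℤ => (z : ℝ)) huv
        push_cast at h'
        exact h'
      have hl1pos : (0:ℝ) < (ℓ₁ : ℝ) := by linarith
      have hl2pos : (0:ℝ) < (ℓ₂ : ℝ) := by linarith
      have hvpos : (0:ℝ) < (n₁ : ℝ) * ℓ₂ + (n₂ : ℝ) * ℓ₁ := by nlinarith
      have hv : X * ((ℓ₁:ℝ) + ℓ₂) < (n₁ : ℝ) * ℓ₂ + (n₂ : ℝ) * ℓ₁ := by nlinarith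
      have h2 : |(ℓ₁:ℝ) ^ 2 - (ℓ₂:ℝ) ^ 2| ≤ L * ((ℓ₁:ℝ) + ℓ₂) := by
        rw [abs_le]
        constructor <;> nlinarith
      have h3 : (n₁ : ℝ) * ℓ₂ + (n₂ : ℝ) * ℓ₁ ≤ |(ℓ₁:ℝ) ^ 2 - (ℓ₂:ℝ) ^ 2| := by
        rw [← hvR, abs_mul, abs_of_pos hvpos]
        nlinarith
      nlinarith

/-- **Square-moduli bound** (used for `H₄(X)` in Wu–Xi): there exist `δ > 0`
and `C > 0` such that for all large `X` and all `X^(1/4) ≤ L ≤ X`,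
`∑_{L < ℓ ≤ 2L} #{X < n ≤ 2X : ℓ² | n² + 1} ≤ C X^(1-δ)`. -/
theorem square_moduli_bound :
    ∃ δ C : ℝ, 0 < δ ∧ 0 < C ∧ ∃ X₀ : ℝ, ∀ X : ℝ, X₀ ≤ X →
      ∀ L : ℝ, X ^ ((1 : ℝ) / 4) ≤ L → L ≤ X →
        ∑ ℓ ∈ (Finset.range (⌊2 * L⌋₊ + 1)).filter
            (fun ℓ : ℕ => L < (ℓ : ℝ) ∧ (ℓ : ℝ) ≤ 2 * L),
          (((Finset.range (⌊2 * X⌋₊ + 1)).filter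
              (fun n : ℕ => X < (n : ℝ) ∧ (n : ℝ) ≤ 2 * X ∧
                ℓ ^ 2 ∣ n ^ 2 + 1)).card : ℝ)
        ≤ C * X ^ ((1 : ℝ) - δ) := by
  refine ⟨1/5, 108, by norm_num, by norm_num, 100, ?_⟩
  intro X hX L hL1 hL2
  have hX0 : (0:ℝ) < X := by linarith
  have hL3 : (3:ℝ) ≤ L := three_le_L hX hL1
  have hL0 : (0:ℝ) < L := by linarith
  have hX1 : (1:ℝ) ≤ X := by linarith
  rw [← Nat.cast_sum, ← Finset.card_sigma]
  have hgoal : (1:ℝ) - 1/5 = (4:ℝ)/5 := by norm_num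
  rw [hgoal]
  have h45 : (1:ℝ) ≤ X ^ ((4:ℝ)/5) := by
    rw [show (1:ℝ) = X ^ (0:ℝ) by rw [Real.rpow_zero]]
    exact Real.rpow_le_rpow_of_exponent_le hX1 (by norm_num)
  by_cases hc : L ≤ X ^ ((7:ℝ)/10)
  · -- small L
    have hb := bound_small X L hX hL1 hL2
    set B := ⌊Real.sqrt (2*L)⌋₊ with hB_def
    set J := ⌊2*X/L^2⌋₊ with hJ_def
    have hq : ((((Finset.range (⌊2 * L⌋₊ + 1)).filter
        (fun ℓ : ℕ => L < (ℓ : ℝ) ∧ (ℓ : ℝ) ≤ 2 * L)).sigma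
      (fun ℓ : ℕ => (Finset.range (⌊2 * X⌋₊ + 1)).filter
        (fun n : ℕ => X < (n : ℝ) ∧ (n : ℝ) ≤ 2 * X ∧ ℓ ^ 2 ∣ n ^ 2 + 1))).card : ℝ)
        ≤ ((2 * (2 * B + 1) ^ 2 * (J + 1) : ℕ) : ℝ) := Nat.cast_le.mpr hb
    push_cast at hq
    have hBle : (B:ℝ) ≤ Real.sqrt (2*L) := Nat.floor_le (Real.sqrt_nonneg _)
    have hs1 : (1:ℝ) ≤ Real.sqrt (2*L) := by
      rw [show (1:ℝ) = Real.sqrt 1 by rw [Real.sqrt_one]]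
      exact Real.sqrt_le_sqrt (by linarith)
    have hsq : Real.sqrt (2*L) ^ 2 = 2*L := Real.sq_sqrt (by linarith)
    have hJle : (J:ℝ) ≤ 2*X/L^2 := Nat.floor_le (by positivity)
    have hJ0 : (0:ℝ) ≤ (J:ℝ) := Nat.cast_nonneg _
    have hstep : 2 * (2*(B:ℝ)+1)^2 * ((J:ℝ)+1) ≤ 36 * L * (2*X/L^2 + 1) := by
      have h1 : (2*(B:ℝ)+1)^2 ≤ 18 * L := by nlinarith
      have h2 : (0:ℝ) < (J:ℝ)+1 := by linarith
      have h3 : (J:ℝ)+1 ≤ 2*X/L^2 + 1 := by linarith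
      have h4 : (0:ℝ) ≤ 2*X/L^2 + 1 := by positivity
      nlinarith
    have hXL : X / L ≤ X ^ ((3:ℝ)/4) := by
      rw [div_le_iff₀ hL0]
      have e2 : X ^ ((3:ℝ)/4) * X ^ ((1:ℝ)/4) = X := by
        rw [← Real.rpow_add hX0]; norm_num
      calc X = X ^ ((3:ℝ)/4) * X ^ ((1:ℝ)/4) := e2.symm
        _ ≤ X ^ ((3:ℝ)/4) * L :=
            mul_le_mul_of_nonneg_left hL1 (Real.rpow_nonneg hX0.le _)
    have h34 : X ^ ((3:ℝ)/4) ≤ X ^ ((4:ℝ)/5) :=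
      Real.rpow_le_rpow_of_exponent_le hX1 (by norm_num)
    have h710 : X ^ ((7:ℝ)/10) ≤ X ^ ((4:ℝ)/5) :=
      Real.rpow_le_rpow_of_exponent_le hX1 (by norm_num)
    have e1 : 36 * L * (2*X/L^2+1) = 72 * (X/L) + 36*L := by
      field_simp
      ring
    have hfinal : 36 * L * (2*X/L^2+1) ≤ 108 * X ^ ((4:ℝ)/5) := by
      rw [e1]
      have : X / L ≤ X ^ ((4:ℝ)/5) := hXL.trans h34
      have : L ≤ X ^ ((4:ℝ)/5) := hc.trans h710
      linarith
    linarith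
  · -- large L
    push_neg at hc
    have hb := bound_large X L hX hL1 hL2
    have hq : ((((Finset.range (⌊2 * L⌋₊ + 1)).filter
        (fun ℓ : ℕ => L < (ℓ : ℝ) ∧ (ℓ : ℝ) ≤ 2 * L)).sigma
      (fun ℓ : ℕ => (Finset.range (⌊2 * X⌋₊ + 1)).filter
        (fun n : ℕ => X < (n : ℝ) ∧ (n : ℝ) ≤ 2 * X ∧ ℓ ^ 2 ∣ n ^ 2 + 1))).card : ℝ)
        ≤ ((⌊5 * X ^ 2 / L ^ 2⌋₊ + 1 : ℕ) : ℝ) := Nat.cast_le.mpr hb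
    push_cast at hq
    have hfl : ((⌊5 * X ^ 2 / L ^ 2⌋₊ : ℕ) : ℝ) ≤ 5 * X ^ 2 / L ^ 2 :=
      Nat.floor_le (by positivity)
    have hLL : X ^ ((7:ℝ)/5) ≤ L^2 := by
      have e : X ^ ((7:ℝ)/10) * X ^ ((7:ℝ)/10) = X ^ ((7:ℝ)/5) := by
        rw [← Real.rpow_add hX0]; norm_num
      have h0 : (0:ℝ) ≤ X ^ ((7:ℝ)/10) := Real.rpow_nonneg hX0.le _
      nlinarith
    have hXX : 5 * X ^ 2 / L ^ 2 ≤ 5 * X ^ ((3:ℝ)/5) := by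
      rw [div_le_iff₀ (by positivity)]
      have e2 : X ^ ((3:ℝ)/5) * X ^ ((7:ℝ)/5) = X ^ 2 := by
        rw [← Real.rpow_add hX0, ← Real.rpow_natCast X 2]
        norm_num
      have h0 : (0:ℝ) ≤ X ^ ((3:ℝ)/5) := Real.rpow_nonneg hX0.le _
      nlinarith
    have h35 : X ^ ((3:ℝ)/5) ≤ X ^ ((4:ℝ)/5) :=
      Real.rpow_le_rpow_of_exponent_le hX1 (by norm_num)
    linarith
end

section
/- With ϑ = 0.847 one has ∫_{1/2}^{ϑ} 2/γ(θ) dθ < 3/2; explicitly, ∫_{1/2}^{64/97} 124/(91 − 89θ) dθ + ∫_{64/97}^{32/41} 120/(86 − 83θ) dθ + ∫_{32/41}^{0.847} 28/(19 − 18θ) dθ < 3/2. -/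
open Real intervalIntegral

/-- log bound via n-th power. -/
lemma log_le_of_pow (x r : ℝ) (n : ℕ) (hx : 0 < x) (hr : 0 < r) (h : x ≤ r ^ n) :
    Real.log x ≤ n * (r - 1) := by
  calc Real.log x ≤ Real.log (r ^ n) := Real.log_le_log hx h
    _ = n * Real.log r := by rw [Real.log_pow]
    _ ≤ n * (r - 1) :=
      mul_le_mul_of_nonneg_left (Real.log_le_sub_one_of_pos hr) (Nat.cast_nonneg n)

/-- Evaluation of ∫ c/(d - e θ). -/
lemma integral_c_div (a b c d e : ℝ) (hab : a ≤ b) (he : 0 < e) (hb : 0 < d - e * b) :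
    ∫ θ in a..b, c / (d - e * θ) =
      c / e * (Real.log (d - e * a) - Real.log (d - e * b)) := by
  have hne : e ≠ 0 := ne_of_gt he
  have hpos : ∀ θ ∈ Set.uIcc a b, 0 < d - e * θ := by
    intro θ hθ
    rw [Set.uIcc_of_le hab] at hθ
    nlinarith [hθ.2]
  have key : ∫ θ in a..b, c / (d - e * θ) =
      (fun θ => -(c / e) * Real.log (d - e * θ)) b -
      (fun θ => -(c / e) * Real.log (d - e * θ)) a := by
    apply intervalIntegral.integral_eq_sub_of_hasDerivAt
    · intro θ hθ
      have h0 : d - e * θ ≠ 0 := ne_of_gt (hpos θ hθ)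
      have h1 : HasDerivAt (fun θ : ℝ => d - e * θ) (-e) θ := by
        simpa using ((hasDerivAt_id θ).const_mul e).const_sub d
      have h2 := (h1.log h0).const_mul (-(c / e))
      convert h2 using 1
      exacts [rfl, by field_simp]
    · apply ContinuousOn.intervalIntegrable
      apply ContinuousOn.div continuousOn_const
      · exact (continuous_const.sub (continuous_const.mul continuous_id)).continuousOn
      · exact fun θ hθ => ne_of_gt (hpos θ hθ)
  rw [key]
  ring

theorem second_part :
    (∫ θ in (1 / 2 : ℝ)..(64 / 97 : ℝ), 124 / (91 - 89 * θ)) +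
      (∫ θ in (64 / 97 : ℝ)..(32 / 41 : ℝ), 120 / (86 - 83 * θ)) +
      (∫ θ in (32 / 41 : ℝ)..(0.847 : ℝ), 28 / (19 - 18 * θ)) < 3 / 2 := by
  have e1 := integral_c_div (1/2) (64/97) 124 91 89 (by norm_num) (by norm_num) (by norm_num)
  have e2 := integral_c_div (64/97) (32/41) 120 86 83 (by norm_num) (by norm_num) (by norm_num)
  have e3 := integral_c_div (32/41) (0.847) 28 19 18 (by norm_num) (by norm_num) (by norm_num)
  rw [e1, e2, e3]
  have l1 : Real.log (91 - 89 * (1/2 : ℝ)) - Real.log (91 - 89 * (64/97)) ≤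
      1024 * (1000356563134/1000000000000 - 1) := by
    rw [← Real.log_div (by norm_num) (by norm_num)]
    have := log_le_of_pow ((91 - 89 * (1/2 : ℝ)) / (91 - 89 * (64/97)))
      (1000356563134/1000000000000) 1024 (by norm_num) (by norm_num)
      (by rw [show (1024:ℕ) = 2*2*2*2*2*2*2*2*2*2 from rfl]; simp only [pow_mul]; norm_num)
    simpa using this
  have l2 : Real.log (86 - 83 * (64/97 : ℝ)) - Real.log (86 - 83 * (32/41)) ≤
      1024 * (1000377694136/1000000000000 - 1) := by
    rw [← Real.log_div (by norm_num) (by norm_num)]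
    have := log_le_of_pow ((86 - 83 * (64/97 : ℝ)) / (86 - 83 * (32/41)))
      (1000377694136/1000000000000) 1024 (by norm_num) (by norm_num)
      (by rw [show (1024:ℕ) = 2*2*2*2*2*2*2*2*2*2 from rfl]; simp only [pow_mul]; norm_num)
    simpa using this
  have l3 : Real.log (19 - 18 * (32/41 : ℝ)) - Real.log (19 - 18 * (0.847 : ℝ)) ≤
      1024 * (1000270360735/1000000000000 - 1) := by
    rw [← Real.log_div (by norm_num) (by norm_num)]
    have := log_le_of_pow ((19 - 18 * (32/41 : ℝ)) / (19 - 18 * (0.847 : ℝ)))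
      (1000270360735/1000000000000) 1024 (by norm_num) (by norm_num)
      (by rw [show (1024:ℕ) = 2*2*2*2*2*2*2*2*2*2 from rfl]; simp only [pow_mul]; norm_num)
    simpa using this
  have c1 : (0:ℝ) < 124 / 89 := by norm_num
  have c2 : (0:ℝ) < 120 / 83 := by norm_num
  have c3 : (0:ℝ) < 28 / 18 := by norm_num
  nlinarith [mul_le_mul_of_nonneg_left l1 c1.le, mul_le_mul_of_nonneg_left l2 c2.le,
    mul_le_mul_of_nonneg_left l3 c3.le]

/-- The sieve exponent `γ(θ)` of Wu–Xi. -/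
noncomputable def gammaWX (θ : ℝ) : ℝ :=
  if θ < 64 / 97 then (91 - 89 * θ) / 62
  else if θ < 32 / 41 then (86 - 83 * θ) / 60
  else (19 - 18 * θ) / 14

lemma eqOn1 : Set.EqOn (fun θ => 2 / gammaWX θ) (fun θ : ℝ => 124 / (91 - 89 * θ))
    (Set.uIcc (1/2 : ℝ) (64/97)) := by
  intro θ hθ
  rw [Set.uIcc_of_le (by norm_num)] at hθ
  obtain ⟨h1, h2⟩ := hθ
  simp only [gammaWX]
  rcases lt_or_eq_of_le h2 with h | h
  · rw [if_pos h]
    have : (91 - 89 * θ) ≠ 0 := by nlinarith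
    field_simp
    ring
  · rw [h, if_neg (lt_irrefl _), if_pos (by norm_num)]
    norm_num
lemma eqOn2 : Set.EqOn (fun θ => 2 / gammaWX θ) (fun θ : ℝ => 120 / (86 - 83 * θ))
    (Set.uIcc (64/97 : ℝ) (32/41)) := by
  intro θ hθ
  rw [Set.uIcc_of_le (by norm_num)] at hθ
  obtain ⟨h1, h2⟩ := hθ
  simp only [gammaWX]
  rw [if_neg (not_lt.mpr h1)]
  rcases lt_or_eq_of_le h2 with h | h
  · rw [if_pos h]
    have : (86 - 83 * θ) ≠ 0 := by nlinarith
    field_simp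
    ring
  · rw [h, if_neg (lt_irrefl _)]
    norm_num
lemma eqOn3 : Set.EqOn (fun θ => 2 / gammaWX θ) (fun θ : ℝ => 28 / (19 - 18 * θ))
    (Set.uIcc (32/41 : ℝ) (0.847)) := by
  intro θ hθ
  rw [Set.uIcc_of_le (by norm_num)] at hθ
  obtain ⟨h1, h2⟩ := hθ
  simp only [gammaWX]
  rw [if_neg (by push_neg; linarith [show (64/97:ℝ) ≤ 32/41 by norm_num]),
    if_neg (not_lt.mpr h1)]
  have : (19 - 18 * θ) ≠ 0 := by
    have : θ ≤ 0.847 := h2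
    nlinarith [this]
  field_simp
  ring

lemma contOn (c d e p q : ℝ) (hpq : p ≤ q) (hb : 0 < d - e * q) (he : 0 ≤ e) :
    ContinuousOn (fun θ : ℝ => c / (d - e * θ)) (Set.uIcc p q) := by
  apply ContinuousOn.div continuousOn_const
  · exact (continuous_const.sub (continuous_const.mul continuous_id)).continuousOn
  · intro θ hθ
    rw [Set.uIcc_of_le hpq] at hθ
    nlinarith [hθ.2]

/-- **The numerical inequality for Theorem 2 of Wu–Xi**: with `ϑ = 0.847`,
`∫_{1/2}^{ϑ} 2/γ(θ) dθ < 3/2`; explicitly,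
`∫_{1/2}^{64/97} 124/(91-89θ) dθ + ∫_{64/97}^{32/41} 120/(86-83θ) dθ
  + ∫_{32/41}^{0.847} 28/(19-18θ) dθ < 3/2`. -/
theorem numerical_integral_inequality :
    (∫ θ in (1 / 2 : ℝ)..(0.847 : ℝ), 2 / gammaWX θ) < 3 / 2 ∧
    (∫ θ in (1 / 2 : ℝ)..(64 / 97 : ℝ), 124 / (91 - 89 * θ)) +
      (∫ θ in (64 / 97 : ℝ)..(32 / 41 : ℝ), 120 / (86 - 83 * θ)) +
      (∫ θ in (32 / 41 : ℝ)..(0.847 : ℝ), 28 / (19 - 18 * θ)) < 3 / 2 := by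
  have h2 := second_part
  refine ⟨?_, h2⟩
  have i1 : IntervalIntegrable (fun θ => 2 / gammaWX θ) MeasureTheory.volume (1/2) (64/97) := by
    apply ContinuousOn.intervalIntegrable
    exact (contOn 124 91 89 (1/2) (64/97) (by norm_num) (by norm_num) (by norm_num)).congr eqOn1
  have i2 : IntervalIntegrable (fun θ => 2 / gammaWX θ) MeasureTheory.volume (64/97) (32/41) := by
    apply ContinuousOn.intervalIntegrable
    exact (contOn 120 86 83 (64/97) (32/41) (by norm_num) (by norm_num) (by norm_num)).congr eqOn2
  have i3 : IntervalIntegrable (fun θ => 2 / gammaWX θ) MeasureTheory.volume (32/41) (0.847) := by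
    apply ContinuousOn.intervalIntegrable
    exact (contOn 28 19 18 (32/41) (0.847) (by norm_num) (by norm_num) (by norm_num)).congr eqOn3
  have split : (∫ θ in (1 / 2 : ℝ)..(0.847 : ℝ), 2 / gammaWX θ) =
      (∫ θ in (1 / 2 : ℝ)..(64/97 : ℝ), 2 / gammaWX θ) +
      (∫ θ in (64/97 : ℝ)..(32/41 : ℝ), 2 / gammaWX θ) +
      (∫ θ in (32/41 : ℝ)..(0.847 : ℝ), 2 / gammaWX θ) := by
    rw [intervalIntegral.integral_add_adjacent_intervals i1 i2,
      intervalIntegral.integral_add_adjacent_intervals (i1.trans i2) i3]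
  rw [split, intervalIntegral.integral_congr eqOn1, intervalIntegral.integral_congr eqOn2,
    intervalIntegral.integral_congr eqOn3]
  exact h2
end
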